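/- Let α be a linear order, M a multiset over α with card M = N, and let r₁ < r₂ < ⋯ < r_K be natural numbers with K ≥ 1 and 1 ≤ r_i ≤ N for each i. Then there exist t ≤ K, elements p₁ < p₂ < ⋯ < p_t of M, and multisets M₀, F₁, M₁, …, F_t, M_t over α such that: (a) M = M₀ + F₁ + M₁ + ⋯ + F_t + M_t; (b) for each i, F_i consists of exactly count(p_i, M) copies of p_i (all elements of F_i equal p_i, with multiplicity equal to the multiplicity of p_i in M); (c) every element of M₀ is strictly less than p₁, and for each 1 ≤ i ≤ t every element of M_i is strictly greater than p_i and (for i < t) strictly less than p_{i+1}; (d) for every rank r_x there exists j with card{y ∈ M : y < p_j} < r_x ≤ card{y ∈ M : y ≤ p_j} (that is, the element of rank r_x in M is p_j); and (e) for every j with 1 ≤ j ≤ t there exists a rank r_x with card{y ∈ M : y < p_j} < r_x ≤ card{y ∈ M : y ≤ p_j}. -/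

import Mathlib

lemma rank_lt_le {α : Type*} [LinearOrder α] (M : Multiset α) (k : ℕ)
    (hk : k < (M.sort (· ≤ ·)).length) :
    Multiset.card (M.filter (fun y => y < (M.sort (· ≤ ·)).get ⟨k, hk⟩)) ≤ k := by
  set L := M.sort (· ≤ ·) with hL
  set e := L.get ⟨k, hk⟩ with he
  have hs : L.Pairwise (· ≤ ·) := M.pairwise_sort _
  have hML : M = (L : Multiset α) := (M.sort_eq _).symm
  rw [hML, ← Multiset.countP_eq_card_filter, Multiset.coe_countP]
  calc List.countP (fun b => decide (b < e)) L
      = List.countP (fun b => decide (b < e)) (L.take k ++ L.drop k) := by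
        rw [List.take_append_drop]
    _ = List.countP (fun b => decide (b < e)) (L.take k)
        + List.countP (fun b => decide (b < e)) (L.drop k) := List.countP_append
    _ ≤ k + 0 := by
        apply Nat.add_le_add
        · exact le_trans List.countP_le_length (by simp)
        · apply le_of_eq
          rw [List.countP_eq_zero]
          intro a ha
          obtain ⟨j, hj, rfl⟩ := List.mem_iff_getElem.mp ha
          have hkj : k + j < L.length := by
            rw [List.length_drop] at hj; omega
          rw [List.getElem_drop (h := hj)]
          simp only [decide_eq_true_eq, not_lt]
          have := hs.rel_get_of_le (a := ⟨k, hk⟩) (b := ⟨k + j, hkj⟩) (by simp)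
          simpa [he] using this
    _ = k := by ring

lemma rank_le_ge {α : Type*} [LinearOrder α] (M : Multiset α) (k : ℕ)
    (hk : k < (M.sort (· ≤ ·)).length) :
    k + 1 ≤ Multiset.card (M.filter (fun y => y ≤ (M.sort (· ≤ ·)).get ⟨k, hk⟩)) := by
  set L := M.sort (· ≤ ·) with hL
  set e := L.get ⟨k, hk⟩ with he
  have hs : L.Pairwise (· ≤ ·) := M.pairwise_sort _
  have hML : M = (L : Multiset α) := (M.sort_eq _).symm
  rw [hML, ← Multiset.countP_eq_card_filter, Multiset.coe_countP]
  have hlen : (L.take (k+1)).length = k + 1 := by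
    rw [List.length_take]; omega
  have h1 : List.countP (fun b => decide (b ≤ e)) (L.take (k+1))
      = (L.take (k+1)).length := by
    rw [List.countP_eq_length]
    intro a ha
    obtain ⟨j, hj, rfl⟩ := List.mem_iff_getElem.mp ha
    rw [hlen] at hj
    rw [List.getElem_take]
    simp only [decide_eq_true_eq]
    have := hs.rel_get_of_le (a := ⟨j, by omega⟩) (b := ⟨k, hk⟩)
      (by simp [Fin.le_def]; omega)
    simpa [he] using this
  rw [hlen] at h1
  calc k + 1 = List.countP (fun b => decide (b ≤ e)) (L.take (k+1)) := h1.symm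
    _ ≤ _ := (List.take_sublist _ _).countP_le


/-- Correctness of the multiset multi-selection (`MselMset`): any multiset `M` of
cardinality `N` over a linear order, with requested ranks `r₁ < ⋯ < r_K`
(`K ≥ 1`, `1 ≤ rᵢ ≤ N`), decomposes into its pivotal multisets
`M₀, F₁, M₁, …, F_t, M_t` around pivots `p₁ < ⋯ < p_t` (`t ≤ K`) satisfying (a)–(e). -/
theorem mselmset_pivotal_decomposition {α : Type*} [LinearOrder α]
    (M : Multiset α) (N K : ℕ) (hN : Multiset.card M = N) (hK : 1 ≤ K)
    (r : Fin K → ℕ) (hr : StrictMono r)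
    (hr1 : ∀ i, 1 ≤ r i) (hrN : ∀ i, r i ≤ N) :
    ∃ t : ℕ, t ≤ K ∧
      ∃ (p : Fin t → α) (M0 : Multiset α) (F Mi : Fin t → Multiset α),
        StrictMono p ∧ (∀ i, p i ∈ M) ∧
        (M = M0 + ∑ i : Fin t, (F i + Mi i)) ∧
        (∀ i, F i = Multiset.replicate (Multiset.count (p i) M) (p i)) ∧
        (∀ x ∈ M0, ∀ h : 0 < t, x < p ⟨0, h⟩) ∧
        (∀ i : Fin t, ∀ x ∈ Mi i,
          p i < x ∧ ∀ h : (i : ℕ) + 1 < t, x < p ⟨(i : ℕ) + 1, h⟩) ∧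
        (∀ x : Fin K, ∃ j : Fin t,
          Multiset.card (M.filter (fun y => y < p j)) < r x ∧
          r x ≤ Multiset.card (M.filter (fun y => y ≤ p j))) ∧
        (∀ j : Fin t, ∃ x : Fin K,
          Multiset.card (M.filter (fun y => y < p j)) < r x ∧
          r x ≤ Multiset.card (M.filter (fun y => y ≤ p j))) := by
  subst hN
  have hLen : (M.sort (· ≤ ·)).length = Multiset.card M := M.length_sort _
  have hx : ∀ x : Fin K, r x - 1 < (M.sort (· ≤ ·)).length := by
    intro x; have h1 := hr1 x; have h2 := hrN x; omega
  set e : Fin K → α := fun x => (M.sort (· ≤ ·)).get ⟨r x - 1, hx x⟩ with he_def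
  have he_mem : ∀ x, e x ∈ M := by
    intro x
    rw [← M.sort_eq (· ≤ ·)]
    exact Multiset.mem_coe.mpr (List.get_mem _ ⟨r x - 1, hx x⟩)
  have he_lt : ∀ x, Multiset.card (M.filter (fun y => y < e x)) < r x := by
    intro x
    have h0 := rank_lt_le M (r x - 1) (hx x)
    have h1 := hr1 x
    simp only [he_def]
    omega
  have he_le : ∀ x, r x ≤ Multiset.card (M.filter (fun y => y ≤ e x)) := by
    intro x
    have h0 := rank_le_ge M (r x - 1) (hx x)
    have h1 := hr1 x
    simp only [he_def]
    omega
  set P : Finset α := Finset.image e Finset.univ with hP_def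
  refine ⟨P.card, le_trans Finset.card_image_le (by simp), ?_⟩
  set t := P.card with ht_def
  set p : Fin t → α := fun i => (P.orderIsoOfFin rfl i : α) with hp_def
  have hp_mono : StrictMono p := fun i j hij => (P.orderIsoOfFin rfl).strictMono hij
  have hp_memP : ∀ i, p i ∈ P := fun i => (P.orderIsoOfFin rfl i).2
  have hP_ex : ∀ a ∈ P, ∃ i, p i = a := fun a ha =>
    ⟨(P.orderIsoOfFin rfl).symm ⟨a, ha⟩,
      congrArg Subtype.val ((P.orderIsoOfFin rfl).apply_symm_apply ⟨a, ha⟩)⟩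
  have hp_e : ∀ i, ∃ x, e x = p i := by
    intro i
    have := hp_memP i
    rw [hP_def] at this
    simpa using Finset.mem_image.mp this
  have hp_mem : ∀ i, p i ∈ M := by
    intro i; obtain ⟨x, hxe⟩ := hp_e i; exact hxe ▸ he_mem x
  refine ⟨p, M.filter (fun y => ∀ j : Fin t, ¬ p j ≤ y),
    fun i => M.filter (fun y => y = p i),
    fun i => M.filter (fun y => p i < y ∧ ∀ j : Fin t, p j ≤ y → j ≤ i),
    hp_mono, hp_mem, ?_, fun i => Multiset.filter_eq' M (p i), ?_, ?_, ?_, ?_⟩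
  · -- (a) decomposition
    ext a
    rw [Multiset.count_add, Multiset.count_sum']
    simp only [Multiset.count_add, Multiset.count_filter]
    by_cases hA : ∀ j : Fin t, ¬ p j ≤ a
    · rw [if_pos hA, Finset.sum_eq_zero, add_zero]
      intro i _
      have h1 : ¬ a = p i := by rintro rfl; exact hA i le_rfl
      have h2 : ¬ (p i < a ∧ ∀ j : Fin t, p j ≤ a → j ≤ i) := by
        rintro ⟨hlt, -⟩; exact hA i hlt.le
      rw [if_neg h1, if_neg h2, add_zero]
    · rw [if_neg hA, zero_add]
      push_neg at hA
      obtain ⟨i, hia, himax⟩ : ∃ i : Fin t, p i ≤ a ∧ ∀ j, p j ≤ a → j ≤ i := by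
        obtain ⟨j0, hj0⟩ := hA
        have hne : (Finset.univ.filter fun j : Fin t => p j ≤ a).Nonempty :=
          ⟨j0, by simp [hj0]⟩
        have hm := Finset.max'_mem _ hne
        rw [Finset.mem_filter] at hm
        exact ⟨_, hm.2, fun j hj => Finset.le_max' _ _ (by simp [hj])⟩
      rw [Finset.sum_eq_single_of_mem i (Finset.mem_univ i)]
      · rcases hia.lt_or_eq with hlt | heq
        · have h1 : ¬ a = p i := by rintro rfl; exact absurd hlt (lt_irrefl _)
          rw [if_neg h1, if_pos ⟨hlt, himax⟩, zero_add]
        · have h2 : ¬ (p i < a ∧ ∀ j : Fin t, p j ≤ a → j ≤ i) := by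
            rintro ⟨hlt, -⟩; exact absurd (heq ▸ hlt) (lt_irrefl _)
          rw [if_pos heq.symm, if_neg h2, add_zero]
      · intro b _ hbi
        have h1 : ¬ a = p b := by
          rintro rfl
          exact hbi (le_antisymm (himax b le_rfl) ((hp_mono.le_iff_le).mp hia))
        have h2 : ¬ (p b < a ∧ ∀ j : Fin t, p j ≤ a → j ≤ b) := by
          rintro ⟨hlt, hmax⟩
          exact hbi (le_antisymm (himax b hlt.le) (hmax i hia))
        rw [if_neg h1, if_neg h2, add_zero]
  · -- (M0 property)
    intro x hx0 h
    have := (Multiset.mem_filter.mp hx0).2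
    exact lt_of_not_ge (this ⟨0, h⟩)
  · -- (Mi property)
    intro i x hxi
    obtain ⟨-, hlt, hmax⟩ := Multiset.mem_filter.mp hxi
    refine ⟨hlt, fun h => lt_of_not_ge fun hle => ?_⟩
    have := hmax ⟨(i : ℕ) + 1, h⟩ hle
    simp only [Fin.le_def, Fin.val_mk] at this
    omega
  · -- (d)
    intro x
    have : e x ∈ P := by simp [hP_def]
    obtain ⟨j, hj⟩ := hP_ex _ this
    exact ⟨j, hj ▸ he_lt x, hj ▸ he_le x⟩
  · -- (e)
    intro j
    obtain ⟨x, hxe⟩ := hp_e j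
    exact ⟨x, hxe ▸ he_lt x, hxe ▸ he_le x⟩
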